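/- Integral Trahan-type theorem: If f : ℝ → ℝ is continuous on the closed interval [a,b] (with a < b) and (f(a) - I_f(a,b)) · (f(b) - I_f(a,b)) ≥ 0, then there exists a point η ∈ (a,b] such that f(η) = (1/(η-a)) · ∫_a^η f(t) dt. -/

import Mathlib

open intervalIntegral Set MeasureTheory Filter in
private lemma integral_trahan_aux (f : ℝ → ℝ) (a b : ℝ) (hab : a < b)
    (hfc : ContinuousOn f (Set.Icc a b))
    (hcond : (f a - (1 / (b - a)) * ∫ t in a..b, f t) *
        (f b - (1 / (b - a)) * ∫ t in a..b, f t) ≥ 0)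
    (hbpos : 0 ≤ f b - (1 / (b - a)) * ∫ t in a..b, f t) :
    ∃ η ∈ Set.Ioc a b, f η = (1 / (η - a)) * ∫ t in a..η, f t := by
  set F : ℝ → ℝ := fun x => ∫ t in a..x, f t with hF
  have hint : ∀ x ∈ Icc a b, IntervalIntegrable f volume a x := by
    intro x hx
    apply (hfc.mono _).intervalIntegrable
    rw [uIcc_of_le hx.1]
    exact Icc_subset_Icc le_rfl hx.2
  have hFcont : ContinuousOn F (Icc a b) := by
    have : ContinuousOn F (uIcc a b) :=
      continuousOn_primitive_interval ((hfc.mono (by rw [uIcc_of_le hab.le])).integrableOn_compact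
        (by rw [uIcc_of_le hab.le]; exact isCompact_Icc))
    rwa [uIcc_of_le hab.le] at this
  set H : ℝ → ℝ := fun x => f x * (x - a) - F x with hH
  have hHcont : ContinuousOn H (Icc a b) :=
    (hfc.mul (continuousOn_id.sub continuousOn_const)).sub hFcont
  have hHb : 0 ≤ H b := by
    have hba : b - a ≠ 0 := sub_ne_zero.mpr hab.ne'
    have : H b = (f b - (1 / (b - a)) * ∫ t in a..b, f t) * (b - a) := by
      field_simp [hH, hF]
      rfl
    rw [this]
    exact mul_nonneg hbpos (by linarith)
  by_cases hzero : ∃ x ∈ Ioc a b, H x ≤ 0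
  · -- IVT gives a zero of H
    obtain ⟨x, hx, hHx⟩ := hzero
    have hsub : Icc x b ⊆ Icc a b := Icc_subset_Icc hx.1.le le_rfl
    have := intermediate_value_Icc hx.2 (hHcont.mono hsub)
    have h0 : (0 : ℝ) ∈ Icc (H x) (H b) := ⟨hHx, hHb⟩
    obtain ⟨η, hη, hHη⟩ := this h0
    refine ⟨η, ⟨lt_of_lt_of_le hx.1 hη.1, hη.2⟩, ?_⟩
    have hηa : η - a ≠ 0 := by
      have : a < η := lt_of_lt_of_le hx.1 hη.1
      linarith
    have : f η * (η - a) = F η := by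
      have := hHη
      simp only [hH] at this
      linarith
    field_simp [hF]
    linarith [this]
  · -- H > 0 on Ioc a b; derive a contradiction
    exfalso
    push_neg at hzero
    set φ : ℝ → ℝ := fun x => F x / (x - a) with hφ
    -- φ is strictly monotone on Ioc a b
    have hderiv : ∀ x ∈ Ioo a b, HasDerivAt φ (H x / (x - a) ^ 2) x := by
      intro x hx
      have hxa : x - a ≠ 0 := by linarith [hx.1]
      have hFd : HasDerivAt F (f x) x := by
        apply integral_hasDerivAt_right (hint x ⟨hx.1.le, hx.2.le⟩)
        · exact ⟨Icc a b, Icc_mem_nhds hx.1 hx.2, (hfc.mono le_rfl).aestronglyMeasurable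
            measurableSet_Icc⟩
        · exact hfc.continuousAt (Icc_mem_nhds hx.1 hx.2)
      have := hFd.div ((hasDerivAt_id x).sub_const a) hxa
      exact this.congr_deriv (by simp [hH])
    have hφcont : ContinuousOn φ (Ioc a b) := by
      apply ContinuousOn.div (hFcont.mono Ioc_subset_Icc_self) (by fun_prop)
      intro x hx; have := hx.1; intro h; linarith [sub_eq_zero.mp h]
    have hmono : StrictMonoOn φ (Ioc a b) := by
      apply strictMonoOn_of_hasDerivWithinAt_pos (convex_Ioc a b) hφcont
      · intro x hx
        rw [interior_Ioc] at hx
        exact ((hderiv x hx).hasDerivWithinAt)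
      · intro x hx
        rw [interior_Ioc] at hx
        have hxa : a < x := hx.1
        have hHx : 0 < H x := hzero x ⟨hx.1, hx.2.le⟩
        exact div_pos hHx (pow_pos (by linarith) 2)
    -- φ tends to f a at a⁺
    have hlim : Tendsto φ (nhdsWithin a (Ioi a)) (nhds (f a)) := by
      have hFd : HasDerivWithinAt F (f a) (Ici a) a := by
        have hmem : Icc a b ∈ nhdsWithin a (Ioi a) :=
          mem_of_superset (Ioo_mem_nhdsGT_of_mem ⟨le_rfl, hab⟩) Ioo_subset_Icc_self
        apply integral_hasDerivWithinAt_right (hint a ⟨le_rfl, hab.le⟩)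
          (t := Ioi a)
        · exact ⟨Icc a b, hmem,
            (hfc.mono le_rfl).aestronglyMeasurable measurableSet_Icc⟩
        · exact (hfc.continuousWithinAt ⟨le_rfl, hab.le⟩).mono_of_mem_nhdsWithin hmem
      have := hasDerivWithinAt_iff_tendsto_slope.mp hFd
      rw [Set.Ici_sdiff_left] at this
      apply this.congr'
      filter_upwards [self_mem_nhdsWithin] with x hx
      have hxa : x - a ≠ 0 := by have : a < x := hx; linarith
      simp only [slope_def_field, hφ]
      have hFa : F a = 0 := intervalIntegral.integral_same
      rw [hFa]
      field_simp
      ring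
    -- midpoint
    set m : ℝ := (a + b) / 2 with hm
    have hma : a < m := by simp only [hm]; linarith
    have hmb : m < b := by simp only [hm]; linarith
    have hfa_le : f a ≤ φ m := by
      apply le_of_tendsto hlim
      filter_upwards [Ioo_mem_nhdsGT_of_mem ⟨le_rfl, hma⟩] with x hx
      exact (hmono ⟨hx.1, (hx.2.trans hmb).le⟩ ⟨hma, hmb.le⟩ hx.2).le
    have hφmb : φ m < φ b := hmono ⟨hma, hmb.le⟩ ⟨hab, le_rfl⟩ hmb
    have hφbI : φ b = (1 / (b - a)) * ∫ t in a..b, f t := by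
      field_simp [hφ, hF]
      rfl
    have hfaI : f a - (1 / (b - a)) * ∫ t in a..b, f t < 0 := by
      rw [← hφbI]; linarith
    have hfbI : 0 < f b - (1 / (b - a)) * ∫ t in a..b, f t := by
      have hHb' : 0 < H b := hzero b ⟨hab, le_rfl⟩
      have hba : b - a ≠ 0 := sub_ne_zero.mpr hab.ne'
      have : H b = (f b - (1 / (b - a)) * ∫ t in a..b, f t) * (b - a) := by
        field_simp [hH, hF]
        rfl
      rw [this] at hHb'
      by_contra h
      push_neg at h
      nlinarith
    nlinarith [hcond]

open intervalIntegral in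
/-- **Integral Trahan-type theorem.** If `f` is continuous on `[a,b]` and
`(f(a) - I_f(a,b))·(f(b) - I_f(a,b)) ≥ 0`, where `I_f(a,b) = (1/(b-a)) ∫_a^b f(t) dt`,
then there exists `η ∈ (a,b]` with `f(η) = (1/(η-a)) ∫_a^η f(t) dt`. -/
theorem integral_trahan_theorem (f : ℝ → ℝ) (a b : ℝ) (hab : a < b)
    (hfc : ContinuousOn f (Set.Icc a b))
    (hcond : (f a - (1 / (b - a)) * ∫ t in a..b, f t) *
        (f b - (1 / (b - a)) * ∫ t in a..b, f t) ≥ 0) :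
    ∃ η ∈ Set.Ioc a b, f η = (1 / (η - a)) * ∫ t in a..η, f t := by
  by_cases hb : 0 ≤ f b - (1 / (b - a)) * ∫ t in a..b, f t
  · exact integral_trahan_aux f a b hab hfc hcond hb
  · push_neg at hb
    have hint : IntervalIntegrable f MeasureTheory.volume a b :=
      (hfc.mono (by rw [Set.uIcc_of_le hab.le])).intervalIntegrable
    have hneg : ∀ x, x ∈ Set.Icc a b → IntervalIntegrable f MeasureTheory.volume a x := by
      intro x hx
      apply (hfc.mono _).intervalIntegrable
      rw [Set.uIcc_of_le hx.1]
      exact Set.Icc_subset_Icc le_rfl hx.2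
    have key := integral_trahan_aux (fun x => -f x) a b hab hfc.neg ?_ ?_
    · obtain ⟨η, hη, heq⟩ := key
      refine ⟨η, hη, ?_⟩
      rw [intervalIntegral.integral_neg] at heq
      linarith [heq]
    · have : (∫ t in a..b, -f t) = -∫ t in a..b, f t := intervalIntegral.integral_neg
      simp only [this]
      ring_nf
      ring_nf at hcond
      linarith [hcond]
    · have : (∫ t in a..b, -f t) = -∫ t in a..b, f t := intervalIntegral.integral_neg
      simp only [this]
      ring_nf
      ring_nf at hb
      linarith [hb]
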